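/- Let f ∈ ℚ_p[x] have Newton polygon with rightmost vertex before the last segment at (i_N, m_N), last segment of slope s_{N+1} with |s_{N+1}| < r, and let g ∈ ℤ_p[x] be p^r-pure of degree d. Then the coefficient c_{d i_N} of x^{d i_N} in f ∘ g satisfies ord_p(c_{d i_N}) = m_N. -/

import Mathlib

/-- The lower convex hull of a set of points in `ℝ × (ℝ ∪ {∞})`: the points lying
within the vertical strip spanned by `S` and on or above every affine lower bound of `S`. -/
def LCH (S : Set (ℝ × EReal)) : Set (ℝ × EReal) :=
  {q | (∃ s ∈ S, s.1 ≤ q.1) ∧ (∃ s ∈ S, q.1 ≤ s.1) ∧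
    ∀ a b : ℝ, (∀ s ∈ S, ((a * s.1 + b : ℝ) : EReal) ≤ s.2) →
      ((a * q.1 + b : ℝ) : EReal) ≤ q.2}
open Polynomial

/- The `p`-adic valuation of an element of `ℚ_[p]`, with `ord_p 0 = ∞`. -/
open Classical in
noncomputable def ordp (p : ℕ) [Fact p.Prime] (x : ℚ_[p]) : EReal :=
  if x = 0 then ⊤ else ((x.valuation : ℝ) : EReal)

/-- The points `(i, ord_p a_i)` attached to a polynomial `f = Σ a_i x^i` over `ℚ_[p]`. -/
def NPpts {p : ℕ} [Fact p.Prime] (f : Polynomial ℚ_[p]) : Set (ℝ × EReal) :=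
  {q | ∃ i : ℕ, i ≤ f.natDegree ∧ q = ((i : ℝ), ordp p (f.coeff i))}

/-- The `p`-adic Newton polygon of `f`, as a region in the plane. -/
noncomputable def NP {p : ℕ} [Fact p.Prime] (f : Polynomial ℚ_[p]) : Set (ℝ × EReal) :=
  LCH (NPpts f)

/-- `f` is pure at `p` of slope `s`: its Newton polygon is the single segment from
`(0, ord_p a_0)` to `(natDegree f, ord_p a_0 + s · natDegree f)`. -/
def IsPure {p : ℕ} [Fact p.Prime] (f : Polynomial ℚ_[p]) (s : ℝ) : Prop :=
  f.coeff 0 ≠ 0 ∧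
  (∀ i ≤ f.natDegree,
    ((((f.coeff 0).valuation : ℝ) + s * i : ℝ) : EReal) ≤ ordp p (f.coeff i)) ∧
  ordp p (f.coeff f.natDegree)
    = ((((f.coeff 0).valuation : ℝ) + s * f.natDegree : ℝ) : EReal)

/-- `f` is `p^r`-pure: one segment, `ord_p a_0 = r` and `ord_p a_n = 0`. -/
def IsPrPure {p : ℕ} [Fact p.Prime] (f : Polynomial ℚ_[p]) (r : ℕ) : Prop :=
  1 ≤ f.natDegree ∧ (f.coeff 0).valuation = (r : ℤ) ∧
  IsPure f (-(r : ℝ) / f.natDegree)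

section aux
variable {p : ℕ} [Fact p.Prime]

lemma one_lt_pR : (1:ℝ) < p := by exact_mod_cast (Fact.out : p.Prime).one_lt
lemma p_posR : (0:ℝ) < p := lt_trans one_pos (one_lt_pR (p := p))

lemma ordp_le_iff (x : ℚ_[p]) (c : ℝ) :
    ((c : ℝ) : EReal) ≤ ordp p x ↔ ‖x‖ ≤ (p:ℝ) ^ (-c) := by
  unfold ordp
  split_ifs with h
  · simp only [h, norm_zero, le_top, true_iff]
    exact (Real.rpow_pos_of_pos p_posR _).le
  · rw [EReal.coe_le_coe_iff, Padic.norm_eq_zpow_neg_valuation h, ← Real.rpow_intCast,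
      Real.rpow_le_rpow_left_iff one_lt_pR]
    push_cast
    constructor <;> intro <;> linarith

lemma ordp_eq_intCast_iff (x : ℚ_[p]) (m : ℤ) :
    ordp p x = (((m:ℝ)) : EReal) ↔ x ≠ 0 ∧ x.valuation = m := by
  unfold ordp
  split_ifs with h
  · simp [h]
  · rw [EReal.coe_eq_coe_iff]
    exact ⟨fun hv => ⟨h, by exact_mod_cast hv⟩, fun hv => by exact_mod_cast hv.2⟩

lemma norm_eq_rpow_of_ordp (x : ℚ_[p]) (m : ℤ) (hx : ordp p x = (((m:ℝ)) : EReal)) :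
    x ≠ 0 ∧ ‖x‖ = (p:ℝ) ^ (-(m:ℝ)) := by
  obtain ⟨h0, hv⟩ := (ordp_eq_intCast_iff x m).mp hx
  refine ⟨h0, ?_⟩
  rw [Padic.norm_eq_zpow_neg_valuation h0, hv, ← Real.rpow_intCast]
  push_cast
  ring_nf

lemma pow_coeff_bound (g : Polynomial ℚ_[p]) (r d : ℕ)
    (hgB : ∀ k : ℕ, ‖g.coeff k‖ ≤ (p:ℝ) ^ (-((r:ℝ) * ((d:ℝ) - (k:ℝ)) / (d:ℝ)))) :
    ∀ i j : ℕ, ‖(g ^ i).coeff j‖ ≤ (p:ℝ) ^ (-((r:ℝ) * ((i:ℝ)*(d:ℝ) - (j:ℝ)) / (d:ℝ))) := by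
  intro i
  induction i with
  | zero =>
    intro j
    rcases Nat.eq_zero_or_pos j with rfl | hj
    · simp only [pow_zero, Polynomial.coeff_one_zero, norm_one, Nat.cast_zero]
      norm_num
    · rw [pow_zero, Polynomial.coeff_one, if_neg (by omega)]
      simp only [norm_zero]
      exact (Real.rpow_pos_of_pos p_posR _).le
  | succ i ih =>
    intro j
    rw [pow_succ, Polynomial.coeff_mul]
    refine IsUltrametricDist.norm_sum_le_of_forall_le_of_nonneg
      (Real.rpow_pos_of_pos p_posR _).le ?_
    intro x hx
    have hxj : (x.1 : ℝ) + (x.2 : ℝ) = (j : ℝ) := by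
      exact_mod_cast congrArg (Nat.cast : ℕ → ℝ) (Finset.HasAntidiagonal.mem_antidiagonal.mp hx)
    calc ‖(g^i).coeff x.1 * g.coeff x.2‖
        = ‖(g^i).coeff x.1‖ * ‖g.coeff x.2‖ := norm_mul _ _
      _ ≤ (p:ℝ)^(-((r:ℝ)*((i:ℝ)*(d:ℝ) - (x.1:ℝ))/(d:ℝ)))
            * (p:ℝ)^(-((r:ℝ)*((d:ℝ) - (x.2:ℝ))/(d:ℝ))) :=
          mul_le_mul (ih x.1) (hgB x.2) (norm_nonneg _) (Real.rpow_pos_of_pos p_posR _).le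
      _ = (p:ℝ)^(-((r:ℝ)*((i:ℝ)*(d:ℝ) - (x.1:ℝ))/(d:ℝ))
            + -((r:ℝ)*((d:ℝ) - (x.2:ℝ))/(d:ℝ))) := (Real.rpow_add p_posR _ _).symm
      _ = (p:ℝ)^(-((r:ℝ)*(((i+1:ℕ):ℝ)*(d:ℝ) - (j:ℝ))/(d:ℝ))) := by
          rw [← hxj]
          push_cast
          ring_nf

end aux

/-- Let `f` be monic with a Newton-polygon vertex at `(i_N, m_N)` and final segment of slope
`s_{N+1} = -m_N/(n - i_N)` with `|s_{N+1}| < r` (so `ord_p a_i ≥ s_{N+1}(i - n)` for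
`i > i_N`), and let `g ∈ ℤ_p[x]` be `p^r`-pure of degree `d`. Then the coefficient
`c_{d·i_N}` of `x^{d·i_N}` in `f ∘ g` satisfies `ord_p(c_{d·i_N}) = m_N`. -/
theorem comp_middle_vertex_valuation (p : ℕ) [Fact p.Prime] (r : ℕ) (hr : 1 ≤ r)
    (f g : Polynomial ℚ_[p]) (hmonic : f.Monic)
    (iN : ℕ) (mN : ℤ) (hiN : iN < f.natDegree)
    (hvert : ordp p (f.coeff iN) = (((mN : ℝ)) : EReal))
    (hslope : |(-(mN : ℝ) / ((f.natDegree : ℝ) - (iN : ℝ)))| < r)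
    (hseg : ∀ i : ℕ, iN < i → i ≤ f.natDegree →
      ((((-(mN : ℝ) / ((f.natDegree : ℝ) - (iN : ℝ))) * ((i : ℝ) - (f.natDegree : ℝ))) : ℝ)
          : EReal) ≤ ordp p (f.coeff i))
    (hgint : ∀ i, ‖g.coeff i‖ ≤ 1) (hg : IsPrPure g r) :
    ordp p ((f.comp g).coeff (g.natDegree * iN)) = (((mN : ℝ)) : EReal) := by
  classical
  obtain ⟨hd1, hval0, hg0ne, hpure, htop⟩ := hg
  set n := f.natDegree with hn
  set d := g.natDegree with hd
  set s : ℝ := -(mN : ℝ) / ((n : ℝ) - (iN : ℝ)) with hs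
  have hdR : (0:ℝ) < d := by exact_mod_cast hd1
  have hdne : (d:ℝ) ≠ 0 := ne_of_gt hdR
  have hniN : (0:ℝ) < (n:ℝ) - (iN:ℝ) := by
    have : (iN:ℝ) < n := by exact_mod_cast hiN
    linarith
  have hkey : s * ((n:ℝ) - (iN:ℝ)) = -(mN:ℝ) := div_mul_cancel₀ _ (ne_of_gt hniN)
  have hsr : 0 < s + r := by
    have := (abs_lt.mp hslope).1
    linarith
  -- bound on coefficients of g
  have hgB : ∀ k : ℕ, ‖g.coeff k‖ ≤ (p:ℝ) ^ (-((r:ℝ) * ((d:ℝ) - (k:ℝ)) / (d:ℝ))) := by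
    intro k
    by_cases hk : k ≤ d
    · have h1 := hpure k hk
      rw [hval0] at h1
      have h2 := (ordp_le_iff _ _).mp h1
      have he : ((r:ℤ):ℝ) + -(r:ℝ) / (d:ℝ) * (k:ℝ) = (r:ℝ) * ((d:ℝ) - (k:ℝ)) / (d:ℝ) := by
        push_cast
        field_simp
        ring
      rwa [he] at h2
    · rw [Polynomial.coeff_eq_zero_of_natDegree_lt (by omega), norm_zero]
      exact (Real.rpow_pos_of_pos p_posR _).le
  -- decompose the coefficient of the composition
  set T : ℕ → ℚ_[p] := fun i => f.coeff i * (g ^ i).coeff (d * iN) with hT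
  have hcomp : (f.comp g).coeff (d * iN) = ∑ i ∈ Finset.range (n + 1), T i := by
    rw [Polynomial.comp_eq_sum_left,
      Polynomial.sum_over_range (f := fun e a => Polynomial.C a * g ^ e) f (by simp),
      Polynomial.finset_sum_coeff]
    simp [hT, Polynomial.coeff_C_mul]
    rfl
  -- the main term
  obtain ⟨hfne, hfnorm⟩ := norm_eq_rpow_of_ordp _ mN hvert
  have hgdord : ordp p (g.coeff d) = (((0:ℤ):ℝ) : EReal) := by
    rw [htop, hval0]
    congr 1
    push_cast
    field_simp
    ring
  obtain ⟨hgdne, hgdnorm⟩ := norm_eq_rpow_of_ordp _ 0 hgdord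
  have hgdnorm1 : ‖g.coeff d‖ = 1 := by
    rw [hgdnorm]; norm_num
  have hlead : ‖(g ^ iN).coeff (d * iN)‖ = 1 := by
    rw [mul_comm d iN, hd, Polynomial.coeff_pow_mul_natDegree, norm_pow,
      Polynomial.leadingCoeff, ← hd, hgdnorm1, one_pow]
  have hTiNnorm : ‖T iN‖ = (p:ℝ) ^ (-(mN:ℝ)) := by
    rw [hT]
    simp only [norm_mul, hlead, hfnorm, mul_one]
  -- the tail
  set C : ℝ := (p:ℝ) ^ (-((mN:ℝ) + (s + r))) with hC
  have hClt : C < (p:ℝ) ^ (-(mN:ℝ)) := by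
    rw [hC, Real.rpow_lt_rpow_left_iff one_lt_pR]
    linarith
  have htail : ∀ i ∈ (Finset.range (n + 1)).erase iN, ‖T i‖ ≤ C := by
    intro i hi
    obtain ⟨hine, hir⟩ := Finset.mem_erase.mp hi
    have hin : i ≤ n := Nat.lt_succ_iff.mp (Finset.mem_range.mp hir)
    rcases lt_trichotomy i iN with hlt | heq | hgt
    · have hz : (g ^ i).coeff (d * iN) = 0 := by
        apply Polynomial.coeff_eq_zero_of_natDegree_lt
        calc (g ^ i).natDegree ≤ i * d := Polynomial.natDegree_pow_le
          _ < d * iN := by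
            have := hd1
            calc i * d < iN * d := Nat.mul_lt_mul_of_pos_right hlt (by omega)
              _ = d * iN := Nat.mul_comm _ _
      rw [hT]
      simp only [hz, mul_zero, norm_zero]
      exact (Real.rpow_pos_of_pos p_posR _).le
    · exact absurd heq hine
    · have hfb : ‖f.coeff i‖ ≤ (p:ℝ) ^ (-(s * ((i:ℝ) - (n:ℝ)))) :=
        (ordp_le_iff _ _).mp (hseg i hgt hin)
      have hgb : ‖(g ^ i).coeff (d * iN)‖ ≤ (p:ℝ) ^ (-((r:ℝ) * ((i:ℝ) - (iN:ℝ)))) := by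
        have hb := pow_coeff_bound g r d hgB i (d * iN)
        have he : (r:ℝ) * ((i:ℝ) * (d:ℝ) - ((d * iN : ℕ):ℝ)) / (d:ℝ)
            = (r:ℝ) * ((i:ℝ) - (iN:ℝ)) := by
          push_cast
          field_simp
        rwa [he] at hb
      have hi1 : (1:ℝ) ≤ (i:ℝ) - (iN:ℝ) := by
        have : iN + 1 ≤ i := hgt
        have := (Nat.cast_le (α := ℝ)).mpr this
        push_cast at this
        linarith
      calc ‖T i‖ = ‖f.coeff i‖ * ‖(g ^ i).coeff (d * iN)‖ := norm_mul _ _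
        _ ≤ (p:ℝ) ^ (-(s * ((i:ℝ) - (n:ℝ)))) * (p:ℝ) ^ (-((r:ℝ) * ((i:ℝ) - (iN:ℝ)))) :=
            mul_le_mul hfb hgb (norm_nonneg _) (Real.rpow_pos_of_pos p_posR _).le
        _ = (p:ℝ) ^ (-(s * ((i:ℝ) - (n:ℝ))) + -((r:ℝ) * ((i:ℝ) - (iN:ℝ)))) :=
            (Real.rpow_add p_posR _ _).symm
        _ ≤ C := by
            rw [hC, Real.rpow_le_rpow_left_iff one_lt_pR]
            nlinarith [hkey, mul_le_mul_of_nonneg_left hi1 hsr.le]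
  have hmem : iN ∈ Finset.range (n + 1) := Finset.mem_range.mpr (by omega)
  have hsum : (f.comp g).coeff (d * iN)
      = T iN + ∑ i ∈ (Finset.range (n + 1)).erase iN, T i := by
    rw [hcomp, Finset.add_sum_erase _ T hmem]
  have hrest : ‖∑ i ∈ (Finset.range (n + 1)).erase iN, T i‖ ≤ C :=
    IsUltrametricDist.norm_sum_le_of_forall_le_of_nonneg
      (Real.rpow_pos_of_pos p_posR _).le htail
  have hrestlt : ‖∑ i ∈ (Finset.range (n + 1)).erase iN, T i‖ < ‖T iN‖ := by
    rw [hTiNnorm]; exact lt_of_le_of_lt hrest hClt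
  have hnorm : ‖(f.comp g).coeff (d * iN)‖ = (p:ℝ) ^ (-(mN:ℝ)) := by
    rw [hsum, Padic.add_eq_max_of_ne (ne_of_gt hrestlt),
      max_eq_left hrestlt.le, hTiNnorm]
  have hne0 : (f.comp g).coeff (d * iN) ≠ 0 := by
    intro h
    rw [h, norm_zero] at hnorm
    exact absurd hnorm.symm (ne_of_gt (Real.rpow_pos_of_pos p_posR _))
  rw [ordp_eq_intCast_iff]
  refine ⟨hne0, ?_⟩
  have := Padic.norm_eq_zpow_neg_valuation hne0
  rw [hnorm] at this
  have h2 : (p:ℝ) ^ (-(mN:ℝ)) = (p:ℝ) ^ (-mN : ℤ) := by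
    rw [← Real.rpow_intCast]
    push_cast
    ring_nf
  rw [h2] at this
  have := (zpow_right_inj₀ p_posR (ne_of_gt one_lt_pR)).mp this.symm
  omega
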